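/- Let φ : G →* H and ψ : H →* K be surjective group homomorphisms, and let ε : FreeGroup σ →* G be a surjective homomorphism (so G, H, K are all marked quotients of the free group F = FreeGroup σ, via ε, φ∘ε and ψ∘φ∘ε respectively). Let Θ = (S', C, D) be a directed tileset with memory set S' ⊆ F, and let a, b ∈ K. If there exists a finite strong directed Θ-snake (ω, x) in (H, φ∘ε) with ψ(ω(0)) = a and ψ(ω(ℓ)) = b, then there exists a finite strong directed Θ-snake (ω', x') in (G, ε) with ψ(φ(ω'(0))) = a and ψ(φ(ω'(ℓ'))) = b. -/

import Mathlib

/-!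
STATEMENT 2 (Lifting snakes through quotients): Let `φ : G →* H` and `ψ : H →* K` be
surjective group homomorphisms and `ε : FreeGroup σ →* G` surjective, so `G, H, K` are
marked quotients of `F = FreeGroup σ`.  Let `Θ = (S', C, D)` be a directed tileset with
memory set `S' ⊆ F` and let `a, b ∈ K`.  If a finite strong directed `Θ`-snake in
`(H, φ ∘ ε)` goes from a `ψ`-preimage of `a` to a `ψ`-preimage of `b`, then so does a
finite strong directed `Θ`-snake in `(G, ε)` (with respect to `ψ ∘ φ`).
-/

/-- A directed tileset over the free group `FreeGroup σ` with base colour type `C₀`: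
a finite memory set `S'`, a finite colour set `C ⊆ C₀ × S'`, and a finite domino set
`D ⊆ C × S' × C`. -/
structure DirTileset (σ : Type) (C₀ : Type) where
  S' : Finset (FreeGroup σ)
  C : Finset (C₀ × FreeGroup σ)
  D : Finset ((C₀ × FreeGroup σ) × FreeGroup σ × (C₀ × FreeGroup σ))
  mem_S' : ∀ c ∈ C, c.2 ∈ S'
  dom_mem : ∀ d ∈ D, d.1 ∈ C ∧ d.2.1 ∈ S' ∧ d.2.2 ∈ C

/-- A finite strong directed `Θ`-snake in `(M, εM)`, indexed by `{0, …, ℓ}`: maps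
`ω : {0,…,ℓ} → M` injective and `x : {0,…,ℓ} → C` (presented as functions on `ℕ`,
constrained only on `{0,…,ℓ}`) such that `ω (i+1) = ω i * εM ((x i).2)` for consecutive
indices, and `(x i, s, x j) ∈ D` whenever `i, j ≤ ℓ`, `s ∈ S'` and `ω j = ω i * εM s`. -/
def IsFinSnake {σ C₀ : Type} {M : Type} [Group M] (εM : FreeGroup σ →* M)
    (Θ : DirTileset σ C₀) (ℓ : ℕ) (ω : ℕ → M) (x : ℕ → C₀ × FreeGroup σ) : Prop :=
  (∀ i ≤ ℓ, ∀ j ≤ ℓ, ω i = ω j → i = j) ∧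
  (∀ i ≤ ℓ, x i ∈ Θ.C) ∧
  (∀ i, i + 1 ≤ ℓ → ω (i + 1) = ω i * εM (x i).2) ∧
  (∀ i ≤ ℓ, ∀ j ≤ ℓ, ∀ s ∈ Θ.S', ω j = ω i * εM s → (x i, (s, x j)) ∈ Θ.D)

theorem finite_strong_directed_snake_lifts
    {σ C₀ G H K : Type} [Fintype σ] [Fintype C₀] [Group G] [Group H] [Group K]
    (φ : G →* H) (hφ : Function.Surjective φ)
    (ψ : H →* K) (hψ : Function.Surjective ψ)
    (ε : FreeGroup σ →* G) (hε : Function.Surjective ε)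
    (Θ : DirTileset σ C₀) (a b : K)
    (h : ∃ (ℓ : ℕ) (ω : ℕ → H) (x : ℕ → C₀ × FreeGroup σ),
      IsFinSnake (φ.comp ε) Θ ℓ ω x ∧ ψ (ω 0) = a ∧ ψ (ω ℓ) = b) :
    ∃ (ℓ' : ℕ) (ω' : ℕ → G) (x' : ℕ → C₀ × FreeGroup σ),
      IsFinSnake ε Θ ℓ' ω' x' ∧ ψ (φ (ω' 0)) = a ∧ ψ (φ (ω' ℓ')) = b := by
  obtain ⟨ℓ, ω, x, ⟨hinj, hC, hstep, hdom⟩, ha, hb⟩ := h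
  obtain ⟨g0, hg0⟩ := hφ (ω 0)
  set ω' : ℕ → G := fun n => Nat.rec g0 (fun n g => g * ε (x n).2) n with hω'
  have hω'succ : ∀ n, ω' (n + 1) = ω' n * ε (x n).2 := fun n => rfl
  have key : ∀ i ≤ ℓ, φ (ω' i) = ω i := by
    intro i
    induction i with
    | zero => intro _; exact hg0
    | succ n ih =>
      intro hn
      rw [hω'succ, map_mul, ih (Nat.le_of_succ_le hn), hstep n hn]
      rfl
  refine ⟨ℓ, ω', x, ⟨?_, hC, fun i _ => hω'succ i, ?_⟩, ?_, ?_⟩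
  · intro i hi j hj hij
    exact hinj i hi j hj (by rw [← key i hi, ← key j hj, hij])
  · intro i hi j hj s hs heq
    refine hdom i hi j hj s hs ?_
    have := congrArg φ heq
    rwa [map_mul, key i hi, key j hj] at this
  · rw [key 0 (Nat.zero_le _)]; exact ha
  · rw [key ℓ le_rfl]; exact hb
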